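/- (The SPO+ loss is an upper bound on the SPO loss.) For all ŷ, y ∈ ℝ^d: ℓ_SPO(ŷ, y) ≤ ℓ_SPO+(ŷ, y). -/
import Mathlib

open MeasureTheory
open scoped RealInnerProductSpace

noncomputable section

/-- The SPO loss: `ℓ_SPO(ŷ, y) = ⟨y, w*(ŷ)⟩ − ⟨y, w*(y)⟩`. -/
def lSPO {d : ℕ} (wStar : EuclideanSpace ℝ (Fin d) → EuclideanSpace ℝ (Fin d))
    (yhat y : EuclideanSpace ℝ (Fin d)) : ℝ :=
  ⟪y, wStar yhat⟫ - ⟪y, wStar y⟫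

/-- The SPO+ loss: `ℓ_SPO+(ŷ, y) = sup_{w ∈ S} ⟨y − 2ŷ, w⟩ + 2⟨ŷ, w*(y)⟩ − ⟨y, w*(y)⟩`. -/
def lSPOplus {d : ℕ} (S : Set (EuclideanSpace ℝ (Fin d)))
    (wStar : EuclideanSpace ℝ (Fin d) → EuclideanSpace ℝ (Fin d))
    (yhat y : EuclideanSpace ℝ (Fin d)) : ℝ :=
  sSup ((fun w => ⟪y - (2 : ℝ) • yhat, w⟫) '' S) + 2 * ⟪yhat, wStar y⟫ - ⟪y, wStar y⟫

/-- The SPO+ loss is an upper bound on the SPO loss. -/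
theorem spo_le_spoPlus {d : ℕ} (S : Set (EuclideanSpace ℝ (Fin d)))
    (hS : S.Nonempty) (hSc : IsCompact S)
    (wStar : EuclideanSpace ℝ (Fin d) → EuclideanSpace ℝ (Fin d))
    (hOracle : ∀ c : EuclideanSpace ℝ (Fin d),
      wStar c ∈ S ∧ ∀ w ∈ S, ⟪c, wStar c⟫ ≤ ⟪c, w⟫) :
    ∀ yhat y : EuclideanSpace ℝ (Fin d),
      lSPO wStar yhat y ≤ lSPOplus S wStar yhat y := by
  intro yhat y
  have hcont : Continuous (fun w : EuclideanSpace ℝ (Fin d) =>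
      ⟪y - (2 : ℝ) • yhat, w⟫) := by
    exact (innerSL ℝ (y - (2 : ℝ) • yhat)).continuous
  have hbdd : BddAbove ((fun w => ⟪y - (2 : ℝ) • yhat, w⟫) '' S) :=
    (hSc.image hcont).bddAbove
  have hmem : ⟪y - (2 : ℝ) • yhat, wStar yhat⟫ ∈
      ((fun w => ⟪y - (2 : ℝ) • yhat, w⟫) '' S) :=
    Set.mem_image_of_mem _ (hOracle yhat).1
  have hsup : ⟪y - (2 : ℝ) • yhat, wStar yhat⟫ ≤
      sSup ((fun w => ⟪y - (2 : ℝ) • yhat, w⟫) '' S) := le_csSup hbdd hmem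
  have hopt : ⟪yhat, wStar yhat⟫ ≤ ⟪yhat, wStar y⟫ :=
    (hOracle yhat).2 _ (hOracle y).1
  have hexp : ⟪y - (2 : ℝ) • yhat, wStar yhat⟫ =
      ⟪y, wStar yhat⟫ - 2 * ⟪yhat, wStar yhat⟫ := by
    rw [inner_sub_left, real_inner_smul_left]
  unfold lSPO lSPOplus
  rw [hexp] at hsup
  linarith
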